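/- For any λ̄ ∈ [0,1], the set D := {(d₁,d₂) ∈ ℝ² : 0 ≤ d₁ ≤ 1, 0 ≤ d₂ ≤ 1, 2d₁ + d₂ ≤ 2 + λ̄, 2d₂ + d₁ ≤ 2 + λ̄} equals the convex hull of the six points (0,0), (0,1), (λ̄,1), ((2+λ̄)/3, (2+λ̄)/3), (1,λ̄), (1,0). -/

import Mathlib

lemma mem3 {s : Set (ℝ × ℝ)} (v1 v2 v3 : ℝ × ℝ) (a b c : ℝ) {p : ℝ × ℝ}
    (h1 : v1 ∈ s) (h2 : v2 ∈ s) (h3 : v3 ∈ s)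
    (ha : 0 ≤ a) (hb : 0 ≤ b) (hc : 0 ≤ c) (hs : a + b + c = 1)
    (hp : p = a • v1 + b • v2 + c • v3) : p ∈ convexHull ℝ s := by
  have hconv := convex_convexHull ℝ s
  have := hconv.sum_mem (t := (Finset.univ : Finset (Fin 3))) (w := ![a,b,c]) (z := ![v1,v2,v3])
    (by intro i _; fin_cases i <;> simpa)
    (by simp [Fin.sum_univ_three, hs])
    (by intro i _; fin_cases i <;>
      simpa using subset_convexHull ℝ s ‹_›)
  simpa [Fin.sum_univ_three, ← hp] using this

set_option maxHeartbeats 1000000 in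
theorem dof_region_eq_convexHull (l : ℝ) (h0 : 0 ≤ l) (h1 : l ≤ 1) :
    {p : ℝ × ℝ | 0 ≤ p.1 ∧ p.1 ≤ 1 ∧ 0 ≤ p.2 ∧ p.2 ≤ 1 ∧
        2 * p.1 + p.2 ≤ 2 + l ∧ 2 * p.2 + p.1 ≤ 2 + l} =
      convexHull ℝ {((0 : ℝ), (0 : ℝ)), (0, 1), (l, 1),
        ((2 + l) / 3, (2 + l) / 3), (1, l), (1, 0)} := by
  apply Set.Subset.antisymm
  · rintro ⟨x, y⟩ ⟨hx0, hx1, hy0, hy1, hc1, hc2⟩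
    simp only at hx0 hx1 hy0 hy1 hc1 hc2
    have h2l : (0:ℝ) < 2 + l := by linarith
    rcases le_total y x with hyx | hxy
    · -- lower triangle  y ≤ x
      rcases le_total y (l * x) with hbelow | habove
      · rcases eq_or_lt_of_le h0 with hl0 | hl0
        · -- l = 0 so y = 0
          have hy : y = 0 := le_antisymm (by nlinarith) hy0
          refine mem3 (0,0) (1,0) (0,0) (1-x) x 0 (by simp) (by simp) (by simp)
            (by linarith) hx0 le_rfl (by ring) ?_
          simp [Prod.ext_iff, hy]
        · -- 0 < l : triangle A F G
          refine mem3 (0,0) (1,l) (1,0) (1-x) (y/l) (x - y/l) (by simp) (by simp) (by simp)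
            (by linarith) (div_nonneg hy0 hl0.le) ?_ (by ring) ?_
          · rw [sub_nonneg, div_le_iff₀ hl0]; linarith [hbelow]
          · simp only [Prod.ext_iff, Prod.smul_mk, Prod.mk_add_mk, smul_eq_mul]
            constructor <;> field_simp <;> ring
      · rcases eq_or_lt_of_le h1 with hl1 | hl1
        · -- l = 1 so y = x (since x = l*x ≤ y ≤ x)
          have hy : y = x := le_antisymm hyx (by nlinarith)
          refine mem3 (0,0) ((2+l)/3, (2+l)/3) (0,0) (1-x) x 0 (by simp) (by simp) (by simp)
            (by linarith) hx0 le_rfl (by ring) ?_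
          simp only [Prod.ext_iff, Prod.smul_mk, Prod.mk_add_mk]
          rw [hy, hl1]; norm_num
        · -- l < 1 : triangle A E F
          have h1l : (0:ℝ) < 1 - l := by linarith
          have hcc : (1 - l) * ((x - y)/(1-l)) = x - y := by field_simp
          have hc : 0 ≤ (x - y)/(1-l) := div_nonneg (by linarith) h1l.le
          have hcx : (x - y)/(1-l) ≤ x := by rw [div_le_iff₀ h1l]; nlinarith
          have hb : 0 ≤ 3*(x - (x - y)/(1-l))/(2+l) := div_nonneg (by linarith) h2l.le
          have hbc : 3*(x - (x - y)/(1-l))/(2+l) + (x - y)/(1-l) ≤ 1 := by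
            rw [div_add' _ _ _ h2l.ne', div_le_one h2l]
            nlinarith [hcc]
          refine mem3 (0,0) ((2+l)/3, (2+l)/3) (1,l)
            (1 - 3*(x - (x - y)/(1-l))/(2+l) - (x - y)/(1-l))
            (3*(x - (x - y)/(1-l))/(2+l)) ((x - y)/(1-l))
            (by simp) (by simp) (by simp)
            (by linarith) hb hc (by ring) ?_
          simp only [Prod.ext_iff, Prod.smul_mk, Prod.mk_add_mk, smul_eq_mul]
          constructor <;> field_simp [h1l.ne', h2l.ne'] <;> ring
    · -- upper triangle x ≤ y (mirror)
      rcases le_total x (l * y) with hbelow | habove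
      · rcases eq_or_lt_of_le h0 with hl0 | hl0
        · have hx : x = 0 := le_antisymm (by nlinarith) hx0
          refine mem3 (0,0) (0,1) (0,0) (1-y) y 0 (by simp) (by simp) (by simp)
            (by linarith) hy0 le_rfl (by ring) ?_
          simp [Prod.ext_iff, hx]
        · refine mem3 (0,0) (l,1) (0,1) (1-y) (x/l) (y - x/l) (by simp) (by simp) (by simp)
            (by linarith) (div_nonneg hx0 hl0.le) ?_ (by ring) ?_
          · rw [sub_nonneg, div_le_iff₀ hl0]; linarith [hbelow]
          · simp only [Prod.ext_iff, Prod.smul_mk, Prod.mk_add_mk, smul_eq_mul]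
            constructor <;> field_simp <;> ring
      · rcases eq_or_lt_of_le h1 with hl1 | hl1
        · have hx : x = y := le_antisymm hxy (by nlinarith)
          refine mem3 (0,0) ((2+l)/3, (2+l)/3) (0,0) (1-y) y 0 (by simp) (by simp) (by simp)
            (by linarith) hy0 le_rfl (by ring) ?_
          simp only [Prod.ext_iff, Prod.smul_mk, Prod.mk_add_mk]
          rw [hx, hl1]; norm_num
        · have h1l : (0:ℝ) < 1 - l := by linarith
          have hcc : (1 - l) * ((y - x)/(1-l)) = y - x := by field_simp
          have hc : 0 ≤ (y - x)/(1-l) := div_nonneg (by linarith) h1l.le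
          have hcx : (y - x)/(1-l) ≤ y := by rw [div_le_iff₀ h1l]; nlinarith
          have hb : 0 ≤ 3*(y - (y - x)/(1-l))/(2+l) := div_nonneg (by linarith) h2l.le
          have hbc : 3*(y - (y - x)/(1-l))/(2+l) + (y - x)/(1-l) ≤ 1 := by
            rw [div_add' _ _ _ h2l.ne', div_le_one h2l]
            nlinarith [hcc]
          refine mem3 (0,0) ((2+l)/3, (2+l)/3) (l,1)
            (1 - 3*(y - (y - x)/(1-l))/(2+l) - (y - x)/(1-l))
            (3*(y - (y - x)/(1-l))/(2+l)) ((y - x)/(1-l))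
            (by simp) (by simp) (by simp)
            (by linarith) hb hc (by ring) ?_
          simp only [Prod.ext_iff, Prod.smul_mk, Prod.mk_add_mk, smul_eq_mul]
          constructor <;> field_simp [h1l.ne', h2l.ne'] <;> ring
  · apply convexHull_min
    · rintro p hp
      simp only [Set.mem_insert_iff, Set.mem_singleton_iff] at hp
      rcases hp with rfl | rfl | rfl | rfl | rfl | rfl <;>
        refine ⟨?_, ?_, ?_, ?_, ?_, ?_⟩ <;> simp <;> linarith
    · rintro ⟨x1, y1⟩ ⟨a1, a2, a3, a4, a5, a6⟩ ⟨x2, y2⟩ ⟨b1, b2, b3, b4, b5, b6⟩ a b ha hb hab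
      refine ⟨?_, ?_, ?_, ?_, ?_, ?_⟩ <;>
        simp only [Prod.smul_mk, Prod.mk_add_mk, smul_eq_mul] <;> nlinarith
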